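/- For a separable metrizable space X the following are equivalent: (1) X is almost zero-dimensional; (2) the hyperspace K(X) with the Vietoris topology is almost zero-dimensional; (3) every subspace 𝒜 of K(X) with F_1(X) ⊆ 𝒜 ⊆ K(X) is almost zero-dimensional. -/

import Mathlib

open Set Topology

noncomputable section

/-- The Vietoris topology on the powerset of `X` induced by a topology `τ`,
generated by the sets `{F | F ⊆ U}` and `{F | F ∩ U ≠ ∅}` for `U` a nonempty `τ`-open set. -/
def VietorisTop {X : Type*} (τ : TopologicalSpace X) : TopologicalSpace (Set X) :=
  TopologicalSpace.generateFrom
    ({S : Set (Set X) | ∃ U : Set X, IsOpen[τ] U ∧ U.Nonempty ∧ S = {F : Set X | F ⊆ U}} ∪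
     {S : Set (Set X) | ∃ U : Set X, IsOpen[τ] U ∧ U.Nonempty ∧ S = {F : Set X | (F ∩ U).Nonempty}})

/-- The hyperspace `K(X)` of nonempty compact subsets of `X`. -/
def HypK (X : Type*) [TopologicalSpace X] : Type _ := {F : Set X // F.Nonempty ∧ IsCompact F}

/-- `K(X)` carries the Vietoris topology. -/
instance (X : Type*) [τ : TopologicalSpace X] : TopologicalSpace (HypK X) :=
  (VietorisTop τ).induced Subtype.val

/-- The `n`-th symmetric product `F_n(X)`: nonempty subsets of `X` with at most `n` points. -/
def HypFn (n : ℕ) (X : Type*) [TopologicalSpace X] : Type _ :=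
  {F : Set X // F.Nonempty ∧ F.Finite ∧ F.ncard ≤ n}

/-- `F_n(X)` carries the Vietoris topology. -/
instance (n : ℕ) (X : Type*) [τ : TopologicalSpace X] : TopologicalSpace (HypFn n X) :=
  (VietorisTop τ).induced Subtype.val

/-- The hyperspace `F(X)` of nonempty finite subsets of `X`. -/
def HypFin (X : Type*) [TopologicalSpace X] : Type _ := {F : Set X // F.Nonempty ∧ F.Finite}

/-- `F(X)` carries the Vietoris topology. -/
instance (X : Type*) [τ : TopologicalSpace X] : TopologicalSpace (HypFin X) :=
  (VietorisTop τ).induced Subtype.val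

/-- A space is almost zero-dimensional if every point has a neighborhood basis consisting of
sets each of which is an intersection of clopen sets. -/
def IsAZD (X : Type*) [TopologicalSpace X] : Prop :=
  ∀ x : X, ∀ U ∈ nhds x, ∃ V ∈ nhds x, V ⊆ U ∧
    ∃ C : Set (Set X), (∀ c ∈ C, IsClopen c) ∧ V = ⋂₀ C

/-- `X` is `𝒜`-cohesive: every point has a neighborhood containing no nonempty proper
subset of an element `A ∈ 𝒜` that is clopen in the subspace topology of `A`. -/
def CohesiveWrt (X : Type*) [TopologicalSpace X] (𝒜 : Set (Set X)) : Prop :=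
  ∀ x : X, ∃ U ∈ nhds x, ∀ A ∈ 𝒜, ∀ C : Set X,
    C ⊆ U → C ⊆ A → C.Nonempty → C ≠ A → ¬ IsClopen {y : A | (y : X) ∈ C}

/-- A space is cohesive if it is `{X}`-cohesive. -/
def Cohesive (X : Type*) [TopologicalSpace X] : Prop := CohesiveWrt X {Set.univ}

/-- Erdős space: the rational points of the Hilbert space `ℓ²`. -/
def ErdosSpace : Type :=
  {x : lp (fun _ : ℕ => ℝ) 2 // ∀ n : ℕ, ∃ q : ℚ, x.val n = (q : ℝ)}

instance : TopologicalSpace ErdosSpace := by unfold ErdosSpace; infer_instance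

/-- Complete Erdős space: points of `ℓ²` all of whose coordinates lie in `{0} ∪ {1/m : m ≥ 1}`. -/
def CompleteErdosSpace : Type :=
  {x : lp (fun _ : ℕ => ℝ) 2 // ∀ n : ℕ, x.val n = 0 ∨ ∃ m : ℕ, 0 < m ∧ x.val n = 1 / (m : ℝ)}

instance : TopologicalSpace CompleteErdosSpace := by unfold CompleteErdosSpace; infer_instance

section Aux
open TopologicalSpace

variable {X : Type*} [τ : TopologicalSpace X]

/-- The generating family of the Vietoris topology. -/
def vGens (X : Type*) [τ : TopologicalSpace X] : Set (Set (Set X)) :=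
  ({S : Set (Set X) | ∃ U : Set X, IsOpen[τ] U ∧ U.Nonempty ∧ S = {F : Set X | F ⊆ U}} ∪
   {S : Set (Set X) | ∃ U : Set X, IsOpen[τ] U ∧ U.Nonempty ∧ S = {F : Set X | (F ∩ U).Nonempty}})

lemma vietorisTop_eq : VietorisTop τ = TopologicalSpace.generateFrom (vGens X) := rfl

lemma genOpen_sub (U : Set X) (hU : IsOpen U) : IsOpen {G : HypK X | G.val ⊆ U} := by
  rcases U.eq_empty_or_nonempty with rfl | hne
  · convert isOpen_empty
    ext G
    simp [Set.subset_empty_iff, G.prop.1.ne_empty]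
  · refine (isOpen_induced_iff (t := VietorisTop τ)
      (f := (Subtype.val : HypK X → Set X))).mpr ⟨{F : Set X | F ⊆ U}, ?_, rfl⟩
    exact TopologicalSpace.GenerateOpen.basic _ (Set.mem_union _ _ _ |>.mpr
      (Or.inl ⟨U, hU, hne, rfl⟩))

lemma genOpen_hit (U : Set X) (hU : IsOpen U) :
    IsOpen {G : HypK X | (G.val ∩ U).Nonempty} := by
  rcases U.eq_empty_or_nonempty with rfl | hne
  · convert isOpen_empty
    ext G
    simp
  · refine (isOpen_induced_iff (t := VietorisTop τ)
      (f := (Subtype.val : HypK X → Set X))).mpr ⟨{F : Set X | (F ∩ U).Nonempty}, ?_, rfl⟩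
    exact TopologicalSpace.GenerateOpen.basic _ (Set.mem_union _ _ _ |>.mpr
      (Or.inr ⟨U, hU, hne, rfl⟩))

lemma clopenSub (c : Set X) (hc : IsClopen c) : IsClopen {G : HypK X | G.val ⊆ c} := by
  refine ⟨?_, genOpen_sub c hc.2⟩
  rw [← isOpen_compl_iff]
  have : {G : HypK X | G.val ⊆ c}ᶜ = {G : HypK X | (G.val ∩ cᶜ).Nonempty} := by
    ext G
    simp [Set.not_subset, Set.inter_compl_nonempty_iff]
  rw [this]
  exact genOpen_hit _ hc.1.isOpen_compl

lemma clopenHit (c : Set X) (hc : IsClopen c) :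
    IsClopen {G : HypK X | (G.val ∩ c).Nonempty} := by
  refine ⟨?_, genOpen_hit c hc.2⟩
  rw [← isOpen_compl_iff]
  have : {G : HypK X | (G.val ∩ c).Nonempty}ᶜ = {G : HypK X | G.val ⊆ cᶜ} := by
    ext G
    simp only [mem_compl_iff, mem_setOf_eq, Set.not_nonempty_iff_eq_empty,
      ← Set.disjoint_iff_inter_eq_empty, Set.disjoint_left, Set.subset_def]
  rw [this]
  exact genOpen_sub _ hc.1.isOpen_compl


lemma generateOpen_finite_subbasis {α : Type*} {g : Set (Set α)} {S : Set α}
    (hS : TopologicalSpace.GenerateOpen g S) :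
    ∀ a ∈ S, ∃ t : Set (Set α), t.Finite ∧ t ⊆ g ∧ a ∈ ⋂₀ t ∧ ⋂₀ t ⊆ S := by
  induction hS with
  | basic s hs =>
    exact fun a ha => ⟨{s}, finite_singleton s, singleton_subset_iff.mpr hs,
      by simpa using ha, by simp⟩
  | univ => exact fun a _ => ⟨∅, finite_empty, empty_subset _, by simp, by simp⟩
  | inter s u _ _ ihs ihu =>
    intro a ha
    obtain ⟨ts, h1, h2, h3, h4⟩ := ihs a ha.1
    obtain ⟨tu, h1', h2', h3', h4'⟩ := ihu a ha.2
    refine ⟨ts ∪ tu, h1.union h1', union_subset h2 h2', ?_, ?_⟩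
    · rw [sInter_union]; exact ⟨h3, h3'⟩
    · rw [sInter_union]; exact fun y hy => ⟨h4 hy.1, h4' hy.2⟩
  | sUnion σ _ ih =>
    intro a ha
    obtain ⟨s, hsσ, has⟩ := ha
    obtain ⟨t, h1, h2, h3, h4⟩ := ih s hsσ a has
    exact ⟨t, h1, h2, h3, h4.trans (subset_sUnion_of_mem hsσ)⟩

/-- C-set neighborhood inside a "hit" subbasic set. -/
lemma hitCset [T2Space X] (h : IsAZD X) (W : Set X) (hW : IsOpen W) (F : HypK X)
    (hFW : (F.val ∩ W).Nonempty) :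
    ∃ V ∈ nhds F, V ⊆ {G : HypK X | (G.val ∩ W).Nonempty} ∧
      ∃ C : Set (Set (HypK X)), (∀ c ∈ C, IsClopen c) ∧ V = ⋂₀ C := by
  obtain ⟨x, hxF, hxW⟩ := hFW
  obtain ⟨V', hV'nhds, hV'W, D, hD, hV'eq⟩ := h x W (hW.mem_nhds hxW)
  refine ⟨{G : HypK X | (G.val ∩ V').Nonempty}, ?_, ?_,
    {S : Set (HypK X) | ∃ s : Set (Set X), s ⊆ D ∧ s.Finite ∧
      S = {G : HypK X | (G.val ∩ ⋂₀ s).Nonempty}}, ?_, ?_⟩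
  · refine Filter.mem_of_superset
      ((genOpen_hit _ isOpen_interior).mem_nhds
        (⟨x, hxF, mem_interior_iff_mem_nhds.mpr hV'nhds⟩ :
          (F.val ∩ interior V').Nonempty)) ?_
    exact fun G ⟨y, h1, h2⟩ => ⟨y, h1, interior_subset h2⟩
  · exact fun G ⟨y, h1, h2⟩ => ⟨y, h1, hV'W h2⟩
  · rintro c ⟨s, hsD, hsfin, rfl⟩
    refine clopenHit _ ?_
    rw [sInter_eq_biInter]
    exact hsfin.isClopen_biInter fun c hc => hD c (hsD hc)
  · ext G
    simp only [mem_setOf_eq, mem_sInter]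
    constructor
    · rintro hG S ⟨s, hsD, hsfin, rfl⟩
      exact hG.mono (inter_subset_inter_right _ (hV'eq ▸ sInter_subset_sInter hsD))
    · intro hG
      rw [hV'eq]
      haveI : Nonempty {s : Set (Set X) // s ⊆ D ∧ s.Finite} :=
        ⟨⟨∅, empty_subset _, finite_empty⟩⟩
      have hcl : ∀ s : {s : Set (Set X) // s ⊆ D ∧ s.Finite}, IsClosed (⋂₀ s.val) :=
        fun s => isClosed_sInter fun c hc => (hD c (s.prop.1 hc)).1
      have key := IsCompact.nonempty_iInter_of_directed_nonempty_isCompact_isClosed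
        (fun s : {s : Set (Set X) // s ⊆ D ∧ s.Finite} => G.val ∩ ⋂₀ s.val)
        (fun s₁ s₂ => ⟨⟨s₁.val ∪ s₂.val, union_subset s₁.prop.1 s₂.prop.1,
            s₁.prop.2.union s₂.prop.2⟩,
          inter_subset_inter_right _ (sInter_subset_sInter subset_union_left),
          inter_subset_inter_right _ (sInter_subset_sInter subset_union_right)⟩)
        (fun s => hG _ ⟨s.val, s.prop.1, s.prop.2, rfl⟩)
        (fun s => G.prop.2.inter_right (hcl s))
        (fun s => (G.prop.2.isClosed).inter (hcl s))
      obtain ⟨y, hy⟩ := key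
      simp only [mem_iInter, mem_inter_iff] at hy
      refine ⟨y, (hy ⟨∅, empty_subset _, finite_empty⟩).1, ?_⟩
      intro d hd
      have := (hy ⟨{d}, singleton_subset_iff.mpr hd, finite_singleton d⟩).2
      simpa using this

/-- C-set neighborhood inside a "subset" subbasic set. -/
lemma subCset (h : IsAZD X) (W : Set X) (hW : IsOpen W) (F : HypK X)
    (hFW : F.val ⊆ W) :
    ∃ V ∈ nhds F, V ⊆ {G : HypK X | G.val ⊆ W} ∧
      ∃ C : Set (Set (HypK X)), (∀ c ∈ C, IsClopen c) ∧ V = ⋂₀ C := by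
  have key : ∀ x : X, ∃ (V : Set X) (C : Set (Set X)), x ∈ F.val →
      (V ∈ nhds x ∧ V ⊆ W ∧ (∀ c ∈ C, IsClopen c) ∧ V = ⋂₀ C) := by
    intro x
    by_cases hx : x ∈ F.val
    · obtain ⟨V, h1, h2, C, h3, h4⟩ := h x W (hW.mem_nhds (hFW hx))
      exact ⟨V, C, fun _ => ⟨h1, h2, h3, h4⟩⟩
    · exact ⟨∅, ∅, fun hx' => absurd hx' hx⟩
  choose V C hVC using key
  obtain ⟨t, htF, hcov⟩ := F.prop.2.elim_nhds_subcover (fun x => interior (V x))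
    (fun x hx => interior_mem_nhds.mpr (hVC x hx).1)
  refine ⟨{G : HypK X | G.val ⊆ ⋃ x ∈ t, V x}, ?_, ?_,
    {S : Set (HypK X) | ∃ f : X → Set X, (∀ x ∈ t, f x ∈ C x) ∧
      S = {G : HypK X | G.val ⊆ ⋃ x ∈ t, f x}}, ?_, ?_⟩
  · refine Filter.mem_of_superset
      ((genOpen_sub _ (isOpen_biUnion fun x _ => isOpen_interior)).mem_nhds hcov) ?_
    exact fun G hG => hG.trans (iUnion₂_mono fun x _ => interior_subset)
  · intro G hG
    exact hG.trans (iUnion₂_subset fun x hx => (hVC x (htF x hx)).2.1)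
  · rintro c ⟨f, hf, rfl⟩
    exact clopenSub _ (isClopen_biUnion_finset fun x hx =>
      (hVC x (htF x hx)).2.2.1 (f x) (hf x hx))
  · ext G
    simp only [mem_setOf_eq, mem_sInter]
    constructor
    · rintro hG S ⟨f, hf, rfl⟩
      refine hG.trans (iUnion₂_mono fun x hx => ?_)
      rw [(hVC x (htF x hx)).2.2.2]
      exact sInter_subset_of_mem (hf x hx)
    · intro hG
      by_contra hGn
      obtain ⟨y, hyG, hy⟩ := (Set.not_subset).mp hGn
      have hy2 : ∀ x ∈ t, ∃ c ∈ C x, y ∉ c := by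
        intro x hx
        have : y ∉ V x := fun hyV => hy (mem_biUnion hx hyV)
        rw [(hVC x (htF x hx)).2.2.2] at this
        simpa [mem_sInter, not_forall] using this
      have : ∀ x : X, ∃ c : Set X, x ∈ t → (c ∈ C x ∧ y ∉ c) := by
        intro x
        by_cases hx : x ∈ t
        · obtain ⟨c, h1, h2⟩ := hy2 x hx
          exact ⟨c, fun _ => ⟨h1, h2⟩⟩
        · exact ⟨∅, fun hx' => absurd hx' hx⟩
      choose f hf using this
      have hGS := hG _ ⟨f, fun x hx => (hf x hx).1, rfl⟩
      obtain ⟨x, hx, hyx⟩ := mem_iUnion₂.mp (hGS hyG)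
      exact (hf x hx).2 hyx

/-- `K(X)` of an almost zero-dimensional T2 space is almost zero-dimensional. -/
lemma isAZD_hypK [T2Space X] (h : IsAZD X) : IsAZD (HypK X) := by
  intro F U hU
  obtain ⟨u, hu, hpre⟩ := (mem_nhds_induced (T := VietorisTop τ)
    (Subtype.val : HypK X → Set X) F U).mp hU
  obtain ⟨O, hOu, hOopen, hFO⟩ := (@mem_nhds_iff (Set X) (VietorisTop τ) F.val u).mp hu
  have hOgen : TopologicalSpace.GenerateOpen (vGens X) O := hOopen
  obtain ⟨t, htfin, htg, hFt, htO⟩ := generateOpen_finite_subbasis hOgen F.val hFO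
  have key : ∀ s ∈ t, ∃ V, V ∈ nhds F ∧ V ⊆ Subtype.val ⁻¹' s ∧
      ∃ C : Set (Set (HypK X)), (∀ c ∈ C, IsClopen c) ∧ V = ⋂₀ C := by
    intro s hs
    rcases htg hs with ⟨W, hWopen, _, rfl⟩ | ⟨W, hWopen, _, rfl⟩
    · obtain ⟨V, h1, h2, h3⟩ := subCset h W hWopen F (hFt _ hs)
      exact ⟨V, h1, h2, h3⟩
    · obtain ⟨V, h1, h2, h3⟩ := hitCset h W hWopen F (hFt _ hs)
      exact ⟨V, h1, h2, h3⟩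
  choose! V hV1 hV2 C hC1 hC2 using key
  refine ⟨⋂ s ∈ t, V s, (Filter.biInter_mem htfin).mpr hV1, ?_, ⋃ s ∈ t, C s, ?_, ?_⟩
  · intro G hG
    apply hpre
    apply hOu
    apply htO
    intro s hs
    exact hV2 s hs (by exact mem_iInter₂.mp hG s hs)
  · intro c hc
    obtain ⟨s, hs, hcs⟩ := mem_iUnion₂.mp hc
    exact hC1 s hs c hcs
  · ext G
    simp only [mem_iInter, mem_sInter, mem_iUnion, exists_prop]
    constructor
    · rintro hG c ⟨s, hs, hcs⟩
      have := hG s hs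
      rw [hC2 s hs] at this
      exact this c hcs
    · intro hG s hs
      rw [hC2 s hs]
      exact fun c hc => hG c ⟨s, hs, hc⟩


/-- AZD pulls back along inducing maps. -/
lemma isAZD_of_isInducing {Y : Type*} [TopologicalSpace Y] {f : X → Y}
    (hf : Topology.IsInducing f) (hY : IsAZD Y) : IsAZD X := by
  intro x U hU
  rw [hf.nhds_eq_comap, Filter.mem_comap] at hU
  obtain ⟨S, hS, hSU⟩ := hU
  obtain ⟨V, hV, hVS, C, hC, hVeq⟩ := hY (f x) S hS
  refine ⟨f ⁻¹' V, ?_, (preimage_mono hVS).trans hSU, (fun c => f ⁻¹' c) '' C, ?_, ?_⟩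
  · rw [hf.nhds_eq_comap]
    exact Filter.preimage_mem_comap hV
  · rintro c ⟨d, hd, rfl⟩
    exact (hC d hd).preimage hf.continuous
  · rw [hVeq, preimage_sInter, sInter_image]

/-- The singleton map into `K(X)`. -/
def singletonHypK (x : X) : HypK X := ⟨{x}, Set.singleton_nonempty x, isCompact_singleton⟩

/-- The singleton map into `K(X)` is inducing. -/
lemma isInducing_singletonHypK :
    Topology.IsInducing (singletonHypK : X → HypK X) := by
  constructor
  show τ = TopologicalSpace.induced _ ((VietorisTop τ).induced (Subtype.val : HypK X → Set X))
  refine Eq.trans ?_ (induced_compose (tγ := VietorisTop τ) (f := (singletonHypK : X → HypK X))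
    (g := (Subtype.val : HypK X → Set X))).symm
  show τ = (VietorisTop τ).induced (fun x : X => ({x} : Set X))
  refine le_antisymm (continuous_iff_le_induced.mp (continuous_generateFrom_iff.mpr ?_)) ?_
  · rintro S (⟨W, h1, h2, rfl⟩ | ⟨W, h1, h2, rfl⟩)
    · convert h1 using 1
      ext x
      simp
    · convert h1 using 1
      ext x
      simp
  · intro U hU
    rcases U.eq_empty_or_nonempty with rfl | hne
    · exact @isOpen_empty X ((VietorisTop τ).induced (fun x : X => ({x} : Set X)))
    · refine (isOpen_induced_iff (t := VietorisTop τ)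
        (f := fun x : X => ({x} : Set X))).mpr
        ⟨{F : Set X | (F ∩ U).Nonempty}, ?_, ?_⟩
      · exact TopologicalSpace.GenerateOpen.basic _ (Set.mem_union _ _ _ |>.mpr
          (Or.inr ⟨U, hU, hne, rfl⟩))
      · ext x
        simp [Set.singleton_inter_nonempty]

end Aux

/-- For a separable metrizable space `X`: `X` is almost zero-dimensional iff `K(X)` is,
iff every subspace `𝒜` of `K(X)` containing all singletons `F_1(X)` is. -/
theorem isAZD_iff_hyperspace_isAZD (X : Type*) [TopologicalSpace X]
    [TopologicalSpace.MetrizableSpace X] [TopologicalSpace.SeparableSpace X] :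
    (IsAZD X ↔ IsAZD (HypK X)) ∧
    (IsAZD X ↔ ∀ 𝒜 : Set (HypK X), {F : HypK X | ∃ x : X, F.val = {x}} ⊆ 𝒜 → IsAZD 𝒜) := by
  refine ⟨⟨fun h => isAZD_hypK h, fun h => isAZD_of_isInducing isInducing_singletonHypK h⟩,
    ⟨fun h 𝒜 _ => isAZD_of_isInducing Topology.IsInducing.subtypeVal (isAZD_hypK h),
     fun h => ?_⟩⟩
  exact isAZD_of_isInducing
    (isInducing_singletonHypK.codRestrict
      (fun x => (⟨x, rfl⟩ : (singletonHypK x) ∈ {F : HypK X | ∃ x : X, F.val = {x}})))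
    (h _ subset_rfl)
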